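/- For bounded linear operators A, B on a complex Hilbert space, √(‖A*A + B*B‖ + 2·w(A*B)) ≤ √(‖A‖² + ‖B‖² + 2‖A*B‖) ≤ ‖A‖ + ‖B‖, where w is the numerical radius. -/

import Mathlib

open ContinuousLinearMap

/-- The numerical radius $w(T)=\sup\{|\langle Tx,x\rangle| : \|x\|=1\}$. -/
noncomputable def numRadius {H : Type*} [NormedAddCommGroup H] [InnerProductSpace ℂ H]
    (T : H →L[ℂ] H) : ℝ :=
  ⨆ x : {x : H // ‖x‖ = 1}, ‖(inner ℂ (T x.1) x.1 : ℂ)‖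

lemma numRadius_le_norm {H : Type*} [NormedAddCommGroup H] [InnerProductSpace ℂ H]
    (T : H →L[ℂ] H) : numRadius T ≤ ‖T‖ := by
  apply Real.iSup_le _ (norm_nonneg T)
  rintro ⟨x, hx⟩
  calc ‖(inner ℂ (T x) x : ℂ)‖ ≤ ‖T x‖ * ‖x‖ := norm_inner_le_norm _ _
    _ ≤ ‖T‖ * ‖x‖ * ‖x‖ := by gcongr; exact T.le_opNorm x
    _ = ‖T‖ := by rw [hx]; ring

theorem stmt11 {H : Type*} [NormedAddCommGroup H] [InnerProductSpace ℂ H] [CompleteSpace H]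
    (A B : H →L[ℂ] H) :
    Real.sqrt (‖adjoint A * A + adjoint B * B‖ + 2 * numRadius (adjoint A * B)) ≤
      Real.sqrt (‖A‖ ^ 2 + ‖B‖ ^ 2 + 2 * ‖adjoint A * B‖) ∧
    Real.sqrt (‖A‖ ^ 2 + ‖B‖ ^ 2 + 2 * ‖adjoint A * B‖) ≤ ‖A‖ + ‖B‖ := by
  have hAA : ‖adjoint A * A‖ = ‖A‖ ^ 2 := by
    rw [pow_two]; exact norm_adjoint_comp_self A
  have hBB : ‖adjoint B * B‖ = ‖B‖ ^ 2 := by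
    rw [pow_two]; exact norm_adjoint_comp_self B
  constructor
  · apply Real.sqrt_le_sqrt
    have h1 : ‖adjoint A * A + adjoint B * B‖ ≤ ‖A‖ ^ 2 + ‖B‖ ^ 2 := by
      calc ‖adjoint A * A + adjoint B * B‖ ≤ ‖adjoint A * A‖ + ‖adjoint B * B‖ :=
            norm_add_le _ _
        _ = ‖A‖ ^ 2 + ‖B‖ ^ 2 := by rw [hAA, hBB]
    have h2 := numRadius_le_norm (adjoint A * B)
    linarith
  · have hab : ‖adjoint A * B‖ ≤ ‖A‖ * ‖B‖ := by
      calc ‖adjoint A * B‖ ≤ ‖adjoint A‖ * ‖B‖ := opNorm_comp_le _ _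
        _ = ‖A‖ * ‖B‖ := by rw [LinearIsometryEquiv.norm_map adjoint]
    calc Real.sqrt (‖A‖ ^ 2 + ‖B‖ ^ 2 + 2 * ‖adjoint A * B‖)
        ≤ Real.sqrt ((‖A‖ + ‖B‖) ^ 2) := by
          apply Real.sqrt_le_sqrt; nlinarith
      _ = ‖A‖ + ‖B‖ := Real.sqrt_sq (by positivity)
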